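/- Equivalence theorem: for any sequent J = (Γ ⊢ A), the singleton goal sequence J reduces to the empty sequence under the tactics transition system (J ▷⁺ □) if and only if J is derivable in natural deduction for minimal propositional logic. -/

import Mathlib

/-- Formulas of minimal propositional logic. -/
inductive Fm : Type
  | var : ℕ → Fm
  | imp : Fm → Fm → Fm
  | conj : Fm → Fm → Fm
  | disj : Fm → Fm → Fm
deriving DecidableEq

abbrev Ctx := Set Fm

/-- Natural deduction for minimal propositional logic. -/
inductive Nd : Ctx → Fm → Prop
  | hyp {Γ A} : A ∈ Γ → Nd Γ A
  | impI {Γ A B} : Nd (insert A Γ) B → Nd Γ (Fm.imp A B)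
  | impE {Γ A B} : Nd Γ (Fm.imp A B) → Nd Γ A → Nd Γ B
  | andI {Γ A B} : Nd Γ A → Nd Γ B → Nd Γ (Fm.conj A B)
  | andE1 {Γ A B} : Nd Γ (Fm.conj A B) → Nd Γ A
  | andE2 {Γ A B} : Nd Γ (Fm.conj A B) → Nd Γ B
  | orI1 {Γ A B} : Nd Γ A → Nd Γ (Fm.disj A B)
  | orI2 {Γ A B} : Nd Γ B → Nd Γ (Fm.disj A B)
  | orE {Γ A B C} : Nd Γ (Fm.disj A B) → Nd (insert A Γ) C → Nd (insert B Γ) C → Nd Γ C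

/-- Sequents (judgements) Γ ⊢ A. -/
abbrev Seqt := Ctx × Fm

/-- One step of the tactics transition system on goal sequences. -/
inductive Step : List Seqt → List Seqt → Prop
  | intro {Γ A B S} : Step ((Γ, Fm.imp A B) :: S) ((insert A Γ, B) :: S)
  | split {Γ A B S} : Step ((Γ, Fm.conj A B) :: S) ((Γ, A) :: (Γ, B) :: S)
  | left {Γ A B S} : Step ((Γ, Fm.disj A B) :: S) ((Γ, A) :: S)
  | right {Γ A B S} : Step ((Γ, Fm.disj A B) :: S) ((Γ, B) :: S)
  | apply {Γ A B S} :
      Step ((insert (Fm.imp A B) Γ, B) :: S) ((insert (Fm.imp A B) Γ, A) :: S)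
  | destructAnd {Γ A B C S} :
      Step ((insert (Fm.conj A B) Γ, C) :: S) ((insert A (insert B Γ), C) :: S)
  | destructOr {Γ A B C S} :
      Step ((insert (Fm.disj A B) Γ, C) :: S) ((insert A Γ, C) :: (insert B Γ, C) :: S)
  | assert {Γ C S} (A : Fm) : Step ((Γ, C) :: S) ((Γ, A) :: (insert A Γ, C) :: S)
  | cut {Γ C S} (A : Fm) : Step ((Γ, C) :: S) ((Γ, Fm.imp A C) :: (Γ, A) :: S)
  | triv {Γ A S} : A ∈ Γ → Step ((Γ, A) :: S) S

lemma nd_weak {Γ Δ : Ctx} {A : Fm} (h : Nd Γ A) (hs : Γ ⊆ Δ) : Nd Δ A := by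
  induction h generalizing Δ with
  | hyp h => exact .hyp (hs h)
  | impI _ ih => exact .impI (ih (Set.insert_subset_insert hs))
  | impE _ _ ih1 ih2 => exact .impE (ih1 hs) (ih2 hs)
  | andI _ _ ih1 ih2 => exact .andI (ih1 hs) (ih2 hs)
  | andE1 _ ih => exact .andE1 (ih hs)
  | andE2 _ ih => exact .andE2 (ih hs)
  | orI1 _ ih => exact .orI1 (ih hs)
  | orI2 _ ih => exact .orI2 (ih hs)
  | orE _ _ _ ih1 ih2 ih3 =>
      exact .orE (ih1 hs) (ih2 (Set.insert_subset_insert hs))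
        (ih3 (Set.insert_subset_insert hs))

def AllNd (S : List Seqt) : Prop := ∀ p ∈ S, Nd p.1 p.2

lemma allNd_cons {p : Seqt} {S : List Seqt} :
    AllNd (p :: S) ↔ Nd p.1 p.2 ∧ AllNd S := List.forall_mem_cons

lemma step_sound {S T : List Seqt} (h : Step S T) (hT : AllNd T) : AllNd S := by
  cases h with
  | intro =>
      obtain ⟨h1, h2⟩ := allNd_cons.mp hT
      exact allNd_cons.mpr ⟨.impI h1, h2⟩
  | split =>
      obtain ⟨h1, hT⟩ := allNd_cons.mp hT
      obtain ⟨h2, h3⟩ := allNd_cons.mp hT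
      exact allNd_cons.mpr ⟨.andI h1 h2, h3⟩
  | left =>
      obtain ⟨h1, h2⟩ := allNd_cons.mp hT
      exact allNd_cons.mpr ⟨.orI1 h1, h2⟩
  | right =>
      obtain ⟨h1, h2⟩ := allNd_cons.mp hT
      exact allNd_cons.mpr ⟨.orI2 h1, h2⟩
  | apply =>
      obtain ⟨h1, h2⟩ := allNd_cons.mp hT
      exact allNd_cons.mpr ⟨.impE (.hyp (Set.mem_insert _ _)) h1, h2⟩
  | @destructAnd Γ A B C S =>
      obtain ⟨h1, h2⟩ := allNd_cons.mp hT
      have hAB : Nd (insert (Fm.conj A B) Γ) (Fm.conj A B) := .hyp (Set.mem_insert _ _)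
      have h3 : Nd Γ (Fm.imp B (Fm.imp A C)) := .impI (.impI h1)
      have h4 : Nd (insert (Fm.conj A B) Γ) (Fm.imp B (Fm.imp A C)) :=
        nd_weak h3 (Set.subset_insert _ _)
      exact allNd_cons.mpr ⟨.impE (.impE h4 (.andE2 hAB)) (.andE1 hAB), h2⟩
  | @destructOr Γ A B C S =>
      obtain ⟨h1, hT⟩ := allNd_cons.mp hT
      obtain ⟨h2, h3⟩ := allNd_cons.mp hT
      have hAB : Nd (insert (Fm.disj A B) Γ) (Fm.disj A B) := .hyp (Set.mem_insert _ _)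
      refine allNd_cons.mpr ⟨.orE hAB ?_ ?_, h3⟩
      · exact nd_weak h1 (Set.insert_subset_insert (Set.subset_insert _ _))
      · exact nd_weak h2 (Set.insert_subset_insert (Set.subset_insert _ _))
  | assert A =>
      obtain ⟨h1, hT⟩ := allNd_cons.mp hT
      obtain ⟨h2, h3⟩ := allNd_cons.mp hT
      exact allNd_cons.mpr ⟨.impE (.impI h2) h1, h3⟩
  | cut A =>
      obtain ⟨h1, hT⟩ := allNd_cons.mp hT
      obtain ⟨h2, h3⟩ := allNd_cons.mp hT
      exact allNd_cons.mpr ⟨.impE h1 h2, h3⟩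
  | triv hmem =>
      exact allNd_cons.mpr ⟨.hyp hmem, hT⟩

lemma nd_steps {Γ : Ctx} {A : Fm} (h : Nd Γ A) :
    ∀ Δ : Ctx, Γ ⊆ Δ → ∀ S : List Seqt, Relation.TransGen Step ((Δ, A) :: S) S := by
  induction h with
  | hyp h => exact fun Δ hs S => .single (.triv (hs h))
  | impI _ ih =>
      exact fun Δ hs S => .head .intro (ih _ (Set.insert_subset_insert hs) S)
  | @impE Γ A B _ _ ih1 ih2 =>
      intro Δ hs S
      refine .head (.assert (Fm.imp A B)) (.trans (ih1 Δ hs _) ?_)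
      exact .head .apply (ih2 _ (fun x hx => Set.mem_insert_of_mem _ (hs hx)) S)
  | andI _ _ ih1 ih2 =>
      intro Δ hs S
      exact .head .split (.trans (ih1 Δ hs _) (ih2 Δ hs S))
  | @andE1 Γ A B _ ih =>
      intro Δ hs S
      refine .head (.assert (Fm.conj A B)) (.trans (ih Δ hs _) ?_)
      exact .head .destructAnd (.single (.triv (Set.mem_insert _ _)))
  | @andE2 Γ A B _ ih =>
      intro Δ hs S
      refine .head (.assert (Fm.conj A B)) (.trans (ih Δ hs _) ?_)
      exact .head .destructAnd
        (.single (.triv (Set.mem_insert_of_mem _ (Set.mem_insert _ _))))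
  | orI1 _ ih => exact fun Δ hs S => .head .left (ih Δ hs S)
  | orI2 _ ih => exact fun Δ hs S => .head .right (ih Δ hs S)
  | @orE Γ A B C _ _ _ ih1 ih2 ih3 =>
      intro Δ hs S
      refine .head (.assert (Fm.disj A B)) (.trans (ih1 Δ hs _) ?_)
      have hsub : Γ ⊆ insert (Fm.disj A B) Δ :=
        fun x hx => Set.mem_insert_of_mem _ (hs hx)
      refine .head .destructOr (.trans (ih2 _ (Set.insert_subset_insert hs) _) ?_)
      exact ih3 _ (Set.insert_subset_insert hs) S

lemma sound_all {S : List Seqt} (h : Relation.TransGen Step S []) : AllNd S := by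
  induction h using Relation.TransGen.head_induction_on with
  | single hstep => exact step_sound hstep (fun p hp => by simp at hp)
  | head hstep _ ih => exact step_sound hstep ih

theorem stmt12 {Γ : Ctx} {A : Fm} :
    Relation.TransGen Step [(Γ, A)] [] ↔ Nd Γ A := by
  constructor
  · intro h
    exact sound_all h (Γ, A) (by simp)
  · intro h
    exact nd_steps h Γ (fun _ hx => hx) []
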